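/- Let U′, U″ be finite subsets of a totally ordered set, k = |U′| + |U″|, and let f : {1,…,k} → U′ ∪ U″ together with the partition {1,…,k} = K′ ⊔ K″ satisfy: f is order preserving, f maps K′ order-isomorphically onto U′ and K″ order-isomorphically onto U″, and whenever f(a) = f(b) with a < b then a ∈ K′ and b ∈ K″. If P ⊆ {1,…,k} is a subset on which f is injective and P < K′ (in the partial order on subsets), then f(P) < f(K′) = U′. -/

import Mathlib

open Finset

/-- The minor `X(A|B)`: the determinant of the submatrix of `X` with row indices in `A` and
column indices in `B`, taken in increasing order; `0` if `|A| ≠ |B|`. -/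
def minorM {m n : ℕ} {R : Type*} [CommRing R]
    (X : Matrix (Fin m) (Fin n) R) (A : Finset (Fin m)) (B : Finset (Fin n)) : R :=
  if h : A.card = B.card then
    (Matrix.of fun i j : Fin A.card =>
      X (A.orderEmbOfFin rfl i) (B.orderEmbOfFin h.symm j)).det
  else 0

/-- The Laplace product `X{A|B} = (-1)^(ΣA+ΣB) X(A|B) X(Ã|B̃)`, where elements of
`Fin n` are counted as the numbers `1,…,n` (so `i : Fin n` counts as `i+1`). -/
def lap {n : ℕ} {R : Type*} [CommRing R]
    (X : Matrix (Fin n) (Fin n) R) (A B : Finset (Fin n)) : R :=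
  (-1 : R) ^ (∑ i ∈ A, ((i : ℕ) + 1) + ∑ j ∈ B, ((j : ℕ) + 1)) *
    (minorM X A B * minorM X Aᶜ Bᶜ)

/-- The partial order `S ≤ T` on finite subsets of a linearly ordered set:
writing `S = {s₁<⋯<s_p}` and `T = {t₁<⋯<t_q}`, it means `p ≥ q` and `s_ν ≤ t_ν` for `ν ≤ q`. -/
def domLE {α : Type*} [LinearOrder α] (S T : Finset α) : Prop :=
  T.card ≤ S.card ∧ ∀ (ν : ℕ) (hT : ν < (T.sort (· ≤ ·)).length)
    (hS : ν < (S.sort (· ≤ ·)).length),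
    (S.sort (· ≤ ·))[ν] ≤ (T.sort (· ≤ ·))[ν]

/-- A subset `S ⊆ {1,…,n}` is good if `S ≤ S̃` where `S̃` is the complement of `S`. -/
def goodSet {n : ℕ} (S : Finset (Fin n)) : Prop := domLE S Sᶜ

/-- The generic `m×n` matrix, whose entries are the indeterminates `x_{ij}`. -/
noncomputable def genX (m n : ℕ) (R : Type*) [CommRing R] :
    Matrix (Fin m) (Fin n) (MvPolynomial (Fin m × Fin n) R) :=
  Matrix.of fun i j => MvPolynomial.X (i, j)

lemma sort_image_aux {α β : Type*} [LinearOrder α] [LinearOrder β]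
    (P : Finset α) (f : α → β) (hf : Monotone f) (hinj : Set.InjOn f ↑P) :
    (P.image f).sort (· ≤ ·) = (P.sort (· ≤ ·)).map f := by
  have hmem : ∀ x ∈ P.sort (· ≤ ·), x ∈ P := fun x hx => (Finset.mem_sort _).1 hx
  have hnd : ((P.sort (· ≤ ·)).map f).Nodup :=
    (Finset.sort_nodup _ _).map_on
      (fun a ha b hb h => hinj (hmem a ha) (hmem b hb) h)
  refine (fun hp hs => List.Perm.eq_of_pairwise' (Finset.pairwise_sort _ _) hs hp) ?_ ?_
  · have h1 : ((P.sort (· ≤ ·)).map f).toFinset = P.image f := by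
      ext b; simp
    have h2 := List.toFinset_eq_iff_perm_dedup.mp
      (((P.image f).sort_toFinset (· ≤ ·)).trans h1.symm)
    rwa [(Finset.sort_nodup _ _).dedup, hnd.dedup] at h2
  · exact List.Pairwise.map f (fun a b h => hf h) (Finset.pairwise_sort _ _)

/-- Lemma 3: in the situation of Lemma 2, if `f` is injective on `P ⊆ {1,…,k}` and
`P < K′` in the partial order on subsets, then `f(P) < f(K′) = U′`. -/
theorem statement11 {α : Type*} [LinearOrder α] (U' U'' : Finset α)
    (f : Fin (U'.card + U''.card) → α)
    (K' K'' : Finset (Fin (U'.card + U''.card)))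
    (hf : Monotone f)
    (hdisj : Disjoint K' K'') (hcover : K' ∪ K'' = Finset.univ)
    (hinj' : Set.InjOn f ↑K') (him' : K'.image f = U')
    (hinj'' : Set.InjOn f ↑K'') (him'' : K''.image f = U'')
    (hb : ∀ a b, f a = f b → a < b → a ∈ K' ∧ b ∈ K'')
    (P : Finset (Fin (U'.card + U''.card)))
    (hPinj : Set.InjOn f ↑P)
    (hP : domLE P K' ∧ P ≠ K') :
    domLE (P.image f) U' ∧ P.image f ≠ U' := by
  obtain ⟨⟨hcard, hle⟩, hne⟩ := hP
  classical
  have hK'card : K'.card = U'.card := by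
    conv_rhs => rw [← him']
    exact (Finset.card_image_of_injOn hinj').symm
  have hPimg : (P.image f).sort (· ≤ ·) = (P.sort (· ≤ ·)).map f :=
    sort_image_aux P f hf hPinj
  have hKimg : U'.sort (· ≤ ·) = (K'.sort (· ≤ ·)).map f := by
    conv_lhs => rw [← him']
    exact sort_image_aux K' f hf hinj'
  have hPcard : (P.image f).card = P.card := Finset.card_image_of_injOn hPinj
  constructor
  · constructor
    · omega
    · intro ν hT hS
      have h1 : ν < (K'.sort (· ≤ ·)).length := by
        simpa [Finset.length_sort, hK'card] using hT
      have h2 : ν < (P.sort (· ≤ ·)).length := by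
        simpa [Finset.length_sort, hPcard] using hS
      have hh := hle ν h1 h2
      simp only [hPimg, hKimg, List.getElem_map]
      exact hf hh
  · intro heq
    apply hne
    have hcard2 : P.card = K'.card := by
      have : (P.image f).card = U'.card := by rw [heq]
      omega
    have hlen : (P.sort (· ≤ ·)).length = (K'.sort (· ≤ ·)).length := by
      simp [hcard2]
    have hmapeq : (P.sort (· ≤ ·)).map f = (K'.sort (· ≤ ·)).map f := by
      rw [← hPimg, ← hKimg, heq]
    have hlisteq : P.sort (· ≤ ·) = K'.sort (· ≤ ·) := by
      apply List.ext_getElem hlen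
      intro ν h2 h1
      by_contra hne2
      have hlt : (P.sort (· ≤ ·))[ν] < (K'.sort (· ≤ ·))[ν] :=
        lt_of_le_of_ne (hle ν h1 h2) hne2
      have hfe : f ((P.sort (· ≤ ·))[ν]) = f ((K'.sort (· ≤ ·))[ν]) := by
        have e1 : ((P.sort (· ≤ ·)).map f)[ν]'(by simpa using h2)
            = ((K'.sort (· ≤ ·)).map f)[ν]'(by simpa using h1) :=
          List.getElem_of_eq hmapeq _
        simpa using e1
      obtain ⟨-, hmem''⟩ := hb _ _ hfe hlt
      have hmem' : (K'.sort (· ≤ ·))[ν] ∈ K' :=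
        (Finset.mem_sort _).1 (List.getElem_mem h1)
      exact Finset.disjoint_left.mp hdisj hmem' hmem''
    rw [← Finset.sort_toFinset P (· ≤ ·), ← Finset.sort_toFinset K' (· ≤ ·), hlisteq]
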